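/- For any positive definite symmetric matrix S with extreme eigenvalue ratio Λ = λ_max(S)/λ_min(S), one has Skew(S) ≥ (1 + Λ)/(2√Λ) - 1; moreover, in dimension d = 2 this inequality is an equality. -/

import Mathlib

/-- `Skew S = sup_{x ≠ 0} ‖x‖₂‖Sx‖₂/(xᵀSx) - 1`, as a supremum over unit vectors. -/
noncomputable def skew {d : ℕ} (S : Matrix (Fin d) (Fin d) ℝ) : ℝ :=
  ⨆ u : {u : Fin d → ℝ // ∑ i, u i ^ 2 = 1},
    Real.sqrt (∑ i, (S.mulVec u.1 i) ^ 2) / (∑ i, u.1 i * S.mulVec u.1 i) - 1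

/-- The smallest eigenvalue of a symmetric matrix, as the infimum of the Rayleigh
quotient over unit vectors. -/
noncomputable def lambdaMin {d : ℕ} (M : Matrix (Fin d) (Fin d) ℝ) : ℝ :=
  ⨅ u : {u : Fin d → ℝ // ∑ i, u i ^ 2 = 1}, ∑ i, u.1 i * M.mulVec u.1 i

/-- The largest eigenvalue of a symmetric matrix, as the supremum of the Rayleigh
quotient over unit vectors. -/
noncomputable def lambdaMax {d : ℕ} (M : Matrix (Fin d) (Fin d) ℝ) : ℝ :=
  ⨆ u : {u : Fin d → ℝ // ∑ i, u i ^ 2 = 1}, ∑ i, u.1 i * M.mulVec u.1 i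

section helpers

variable {d : ℕ} {S : Matrix (Fin d) (Fin d) ℝ}

/-- coefficients of a vector in the eigenbasis -/
noncomputable def coef (hH : S.IsHermitian) (u : Fin d → ℝ) : Fin d → ℝ :=
  fun i => hH.eigenvectorBasis.repr ((WithLp.equiv 2 (Fin d → ℝ)).symm u) i

theorem coef_mulVec (hS : S.PosDef) (u : Fin d → ℝ) (i : Fin d) :
    coef hS.1 (S.mulVec u) i = hS.1.eigenvalues i * coef hS.1 u i := by
  unfold coef
  rw [OrthonormalBasis.repr_apply_apply, OrthonormalBasis.repr_apply_apply]
  simp only [PiLp.inner_apply, RCLike.inner_apply', starRingEnd_apply, star_trivial,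
    WithLp.equiv_symm_apply, PiLp.toLp_apply]
  have hsym : ∀ j k, S j k = S k j := by
    intro j k
    have h := hS.1
    rw [Matrix.IsHermitian] at h
    exact congrFun (congrFun h.symm k) j ▸ rfl
  have key : ∀ x y : Fin d → ℝ, ∑ j, x j * (S.mulVec y) j = ∑ k, (S.mulVec x) k * y k := by
    intro x y
    simp only [Matrix.mulVec, dotProduct, Finset.sum_mul, Finset.mul_sum]
    rw [Finset.sum_comm]
    exact Finset.sum_congr rfl fun k _ => Finset.sum_congr rfl fun j _ => by rw [hsym j k]; ring
  rw [key]
  have hm : ∀ k, S.mulVec (hS.1.eigenvectorBasis i) k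
      = hS.1.eigenvalues i * hS.1.eigenvectorBasis i k :=
    fun k => congrFun (hS.1.mulVec_eigenvectorBasis i) k
  simp only [hm, Finset.mul_sum]
  exact Finset.sum_congr rfl fun k _ => by ring

theorem coef_parseval (hH : S.IsHermitian) (x y : Fin d → ℝ) :
    ∑ i, coef hH x i * coef hH y i = ∑ i, x i * y i := by
  have h := hH.eigenvectorBasis.repr.inner_map_map
    ((WithLp.equiv 2 (Fin d → ℝ)).symm x) ((WithLp.equiv 2 (Fin d → ℝ)).symm y)
  simp only [PiLp.inner_apply, RCLike.inner_apply', starRingEnd_apply, star_trivial,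
    WithLp.equiv_symm_apply, PiLp.toLp_apply] at h
  exact h

theorem coef_surj (hH : S.IsHermitian) (cc : Fin d → ℝ) : ∃ u : Fin d → ℝ, coef hH u = cc := by
  refine ⟨(WithLp.equiv 2 (Fin d → ℝ))
      (hH.eigenvectorBasis.repr.symm ((WithLp.equiv 2 (Fin d → ℝ)).symm cc)), ?_⟩
  funext i
  unfold coef
  rw [(WithLp.equiv 2 (Fin d → ℝ)).symm_apply_apply, LinearIsometryEquiv.apply_symm_apply]
  rfl

theorem coef_eigenvector (hH : S.IsHermitian) (j : Fin d) :
    coef hH (hH.eigenvectorBasis j) = fun i => if i = j then 1 else 0 := by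
  funext i
  unfold coef
  rw [show hH.eigenvectorBasis.repr ((WithLp.equiv 2 (Fin d → ℝ)).symm (hH.eigenvectorBasis j))
      = EuclideanSpace.single j (1 : ℝ) from hH.eigenvectorBasis.repr_self j,
    EuclideanSpace.single_apply]

theorem sum_coef_two {i₀ i₁ : Fin d} (h : i₀ ≠ i₁) (a b : ℝ) (f : Fin d → ℝ) :
    ∑ i, f i * (if i = i₀ then a else if i = i₁ then b else 0) ^ 2
      = f i₀ * a ^ 2 + f i₁ * b ^ 2 := by
  have key : ∀ i, f i * (if i = i₀ then a else if i = i₁ then b else 0) ^ 2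
      = (if i = i₀ then f i * a ^ 2 else 0) + (if i = i₁ then f i * b ^ 2 else 0) := by
    intro i
    by_cases h0 : i = i₀ <;> by_cases h1 : i = i₁
    · exact absurd (h0.symm.trans h1) h
    · simp [h0, h1, h, Ne.symm h]
    · simp [h0, h1, h, Ne.symm h]
    · simp [h0, h1, h, Ne.symm h]
  simp only [key, Finset.sum_add_distrib, Finset.sum_ite_eq', Finset.mem_univ, if_true]

theorem kantorovich (a b x y : ℝ) (ha : 0 < a) (hb : 0 < b) (hx : 0 ≤ x) (hy : 0 ≤ y)
    (hxy : x + y = 1) :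
    Real.sqrt (a ^ 2 * x + b ^ 2 * y) / (a * x + b * y)
      ≤ (a + b) / (2 * Real.sqrt (a * b)) := by
  have hD : 0 < a * x + b * y := by
    have hmin : 0 < min a b := lt_min ha hb
    calc (0:ℝ) < min a b := hmin
      _ = min a b * x + min a b * y := by rw [← mul_add, hxy, mul_one]
      _ ≤ a * x + b * y := add_le_add
          (mul_le_mul_of_nonneg_right (min_le_left a b) hx)
          (mul_le_mul_of_nonneg_right (min_le_right a b) hy)
  have hab : 0 < Real.sqrt (a * b) := Real.sqrt_pos.2 (mul_pos ha hb)
  have hN : 0 ≤ a ^ 2 * x + b ^ 2 * y := by positivity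
  rw [div_le_div_iff₀ hD (by positivity)]
  obtain rfl : y = 1 - x := by linarith
  have h1 : (a ^ 2 * x + b ^ 2 * (1 - x)) * (a * b)
      ≤ ((a + b) * (a * x + b * (1 - x)) / 2) ^ 2 := by
    nlinarith [sq_nonneg ((a + b) * (a * x + b * (1 - x)) - 2 * (a * b))]
  calc Real.sqrt (a ^ 2 * x + b ^ 2 * (1 - x)) * (2 * Real.sqrt (a * b))
      = 2 * Real.sqrt ((a ^ 2 * x + b ^ 2 * (1 - x)) * (a * b)) := by
        rw [Real.sqrt_mul hN]; ring
    _ ≤ 2 * ((a + b) * (a * x + b * (1 - x)) / 2) := by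
        have h2 := Real.sqrt_le_sqrt h1
        rw [Real.sqrt_sq (by positivity)] at h2
        linarith
    _ = (a + b) * (a * x + b * (1 - x)) := by ring

theorem bound_eq {m M : ℝ} (hm : 0 < m) (hM : 0 < M) :
    (1 + M / m) / (2 * Real.sqrt (M / m)) = (m + M) / (2 * Real.sqrt (m * M)) := by
  have h1 : Real.sqrt (M / m) = Real.sqrt (m * M) / m := by
    rw [show M / m = m * M / m ^ 2 by field_simp, Real.sqrt_div (by positivity),
      Real.sqrt_sq hm.le]
  have hs : 0 < Real.sqrt (m * M) := Real.sqrt_pos.2 (by positivity)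
  have hs2 : Real.sqrt (m * M) ^ 2 = m * M := Real.sq_sqrt (by positivity)
  rw [h1, div_eq_div_iff (by positivity) (by positivity)]
  field_simp

end helpers

set_option maxHeartbeats 1000000

/-- Lower bound on skewness: with `Λ` the ratio of extreme eigenvalues,
`Skew S ≥ (1+Λ)/(2√Λ) - 1`, with equality in dimension 2. -/
theorem skew_ge_eigenvalue_ratio_bound (d : ℕ) (hd : 0 < d)
    (S : Matrix (Fin d) (Fin d) ℝ) (hS : S.PosDef) :
    (1 + lambdaMax S / lambdaMin S) / (2 * Real.sqrt (lambdaMax S / lambdaMin S)) - 1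
        ≤ skew S ∧
      (d = 2 →
        skew S =
          (1 + lambdaMax S / lambdaMin S) /
              (2 * Real.sqrt (lambdaMax S / lambdaMin S)) - 1) := by
  haveI hne : Nonempty (Fin d) := ⟨⟨0, hd⟩⟩
  obtain ⟨i₀, -, hi₀⟩ := Finset.exists_min_image Finset.univ hS.1.eigenvalues
    ⟨Classical.arbitrary (Fin d), Finset.mem_univ _⟩
  obtain ⟨i₁, -, hi₁⟩ := Finset.exists_max_image Finset.univ hS.1.eigenvalues
    ⟨Classical.arbitrary (Fin d), Finset.mem_univ _⟩
  have hμpos : ∀ i, 0 < hS.1.eigenvalues i := fun i => hS.eigenvalues_pos i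
  have hm : 0 < hS.1.eigenvalues i₀ := hμpos i₀
  have hM : 0 < hS.1.eigenvalues i₁ := hμpos i₁
  have hA : ∀ u : Fin d → ℝ, ∑ i, coef hS.1 u i ^ 2 = ∑ i, u i ^ 2 := fun u => by
    simpa only [pow_two] using coef_parseval hS.1 u u
  have hB : ∀ u : Fin d → ℝ,
      ∑ i, u i * S.mulVec u i = ∑ i, hS.1.eigenvalues i * coef hS.1 u i ^ 2 := fun u => by
    rw [← coef_parseval hS.1 u (S.mulVec u)]
    exact Finset.sum_congr rfl fun i _ => by rw [coef_mulVec hS u i]; ring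
  have hC : ∀ u : Fin d → ℝ,
      ∑ i, (S.mulVec u i) ^ 2 = ∑ i, hS.1.eigenvalues i ^ 2 * coef hS.1 u i ^ 2 := fun u => by
    calc ∑ i, (S.mulVec u i) ^ 2 = ∑ i, S.mulVec u i * S.mulVec u i := by
          simp only [pow_two]
      _ = ∑ i, coef hS.1 (S.mulVec u) i * coef hS.1 (S.mulVec u) i :=
          (coef_parseval hS.1 _ _).symm
      _ = ∑ i, hS.1.eigenvalues i ^ 2 * coef hS.1 u i ^ 2 :=
          Finset.sum_congr rfl fun i _ => by rw [coef_mulVec hS u i]; ring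
  have hunit : ∀ j : Fin d, ∑ i, (hS.1.eigenvectorBasis j) i ^ 2 = 1 := fun j => by
    have h1 := hA (hS.1.eigenvectorBasis j)
    rw [coef_eigenvector hS.1 j] at h1
    rw [← h1]
    simp [Finset.sum_ite_eq']
  have hrayeig : ∀ j : Fin d,
      ∑ i, (hS.1.eigenvectorBasis j) i * S.mulVec (hS.1.eigenvectorBasis j) i
        = hS.1.eigenvalues j := fun j => by
    have h2 := hB (hS.1.eigenvectorBasis j)
    rw [coef_eigenvector hS.1 j] at h2
    rw [h2]
    simp [Finset.sum_ite_eq']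
  have hnormeig : ∀ j : Fin d,
      ∑ i, (S.mulVec (hS.1.eigenvectorBasis j) i) ^ 2 = hS.1.eigenvalues j ^ 2 := fun j => by
    have h3 := hC (hS.1.eigenvectorBasis j)
    rw [coef_eigenvector hS.1 j] at h3
    rw [h3]
    simp [Finset.sum_ite_eq']
  have hray_lb : ∀ u : Fin d → ℝ, ∑ i, u i ^ 2 = 1 →
      hS.1.eigenvalues i₀ ≤ ∑ i, u i * S.mulVec u i := by
    intro u hu
    rw [hB u]
    calc hS.1.eigenvalues i₀ = ∑ i, hS.1.eigenvalues i₀ * coef hS.1 u i ^ 2 := by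
          rw [← Finset.mul_sum, hA u, hu, mul_one]
      _ ≤ ∑ i, hS.1.eigenvalues i * coef hS.1 u i ^ 2 :=
          Finset.sum_le_sum fun i _ =>
            mul_le_mul_of_nonneg_right (hi₀ i (Finset.mem_univ i)) (sq_nonneg _)
  have hray_ub : ∀ u : Fin d → ℝ, ∑ i, u i ^ 2 = 1 →
      ∑ i, u i * S.mulVec u i ≤ hS.1.eigenvalues i₁ := by
    intro u hu
    rw [hB u]
    calc ∑ i, hS.1.eigenvalues i * coef hS.1 u i ^ 2
        ≤ ∑ i, hS.1.eigenvalues i₁ * coef hS.1 u i ^ 2 :=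
          Finset.sum_le_sum fun i _ =>
            mul_le_mul_of_nonneg_right (hi₁ i (Finset.mem_univ i)) (sq_nonneg _)
      _ = hS.1.eigenvalues i₁ := by rw [← Finset.mul_sum, hA u, hu, mul_one]
  have hnum : ∀ u : Fin d → ℝ, ∑ i, u i ^ 2 = 1 →
      Real.sqrt (∑ i, (S.mulVec u i) ^ 2) ≤ hS.1.eigenvalues i₁ := by
    intro u hu
    rw [hC u]
    have h1 : ∑ i, hS.1.eigenvalues i ^ 2 * coef hS.1 u i ^ 2 ≤ hS.1.eigenvalues i₁ ^ 2 := by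
      calc ∑ i, hS.1.eigenvalues i ^ 2 * coef hS.1 u i ^ 2
          ≤ ∑ i, hS.1.eigenvalues i₁ ^ 2 * coef hS.1 u i ^ 2 :=
            Finset.sum_le_sum fun i _ =>
              mul_le_mul_of_nonneg_right
                (pow_le_pow_left₀ (hμpos i).le (hi₁ i (Finset.mem_univ i)) 2) (sq_nonneg _)
        _ = hS.1.eigenvalues i₁ ^ 2 := by rw [← Finset.mul_sum, hA u, hu, mul_one]
    calc Real.sqrt (∑ i, hS.1.eigenvalues i ^ 2 * coef hS.1 u i ^ 2)
        ≤ Real.sqrt (hS.1.eigenvalues i₁ ^ 2) := Real.sqrt_le_sqrt h1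
      _ = hS.1.eigenvalues i₁ := Real.sqrt_sq hM.le
  have hbdd : BddAbove (Set.range fun u : {u : Fin d → ℝ // ∑ i, u i ^ 2 = 1} =>
      Real.sqrt (∑ i, (S.mulVec u.1 i) ^ 2) / (∑ i, u.1 i * S.mulVec u.1 i) - 1) := by
    refine ⟨hS.1.eigenvalues i₁ / hS.1.eigenvalues i₀ - 1, ?_⟩
    rintro x ⟨u, rfl⟩
    exact sub_le_sub_right
      (div_le_div₀ hM.le (hnum u.1 u.2) hm (hray_lb u.1 u.2)) 1
  haveI hTne : Nonempty {u : Fin d → ℝ // ∑ i, u i ^ 2 = 1} := ⟨⟨_, hunit i₀⟩⟩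
  have hmin : lambdaMin S = hS.1.eigenvalues i₀ := by
    unfold lambdaMin
    apply le_antisymm
    · have h := ciInf_le (f := fun u : {u : Fin d → ℝ // ∑ i, u i ^ 2 = 1} =>
        ∑ i, u.1 i * S.mulVec u.1 i)
        ⟨hS.1.eigenvalues i₀, by rintro x ⟨u, rfl⟩; exact hray_lb u.1 u.2⟩ ⟨_, hunit i₀⟩
      exact h.trans (le_of_eq (hrayeig i₀))
    · exact le_ciInf fun u => hray_lb u.1 u.2
  have hmax : lambdaMax S = hS.1.eigenvalues i₁ := by
    unfold lambdaMax
    apply le_antisymm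
    · exact ciSup_le fun u => hray_ub u.1 u.2
    · have h := le_ciSup (f := fun u : {u : Fin d → ℝ // ∑ i, u i ^ 2 = 1} =>
        ∑ i, u.1 i * S.mulVec u.1 i)
        ⟨hS.1.eigenvalues i₁, by rintro x ⟨u, rfl⟩; exact hray_ub u.1 u.2⟩ ⟨_, hunit i₁⟩
      exact (le_of_eq (hrayeig i₁).symm).trans h
  have key1 : (hS.1.eigenvalues i₀ + hS.1.eigenvalues i₁)
      / (2 * Real.sqrt (hS.1.eigenvalues i₀ * hS.1.eigenvalues i₁)) - 1 ≤ skew S := by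
    rcases eq_or_lt_of_le (hi₀ i₁ (Finset.mem_univ i₁)) with heq | hlt
    · rw [← heq]
      have hb0 : (hS.1.eigenvalues i₀ + hS.1.eigenvalues i₀)
          / (2 * Real.sqrt (hS.1.eigenvalues i₀ * hS.1.eigenvalues i₀)) - 1 = 0 := by
        rw [Real.sqrt_mul_self hm.le]
        field_simp
        ring
      rw [hb0]
      unfold skew
      have hcomp : Real.sqrt (∑ i, (S.mulVec (hS.1.eigenvectorBasis i₀) i) ^ 2)
          / (∑ i, (hS.1.eigenvectorBasis i₀) i * S.mulVec (hS.1.eigenvectorBasis i₀) i)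
          - 1 = 0 := by
        rw [hnormeig i₀, hrayeig i₀, Real.sqrt_sq hm.le, div_self hm.ne']
        ring
      exact le_trans (le_of_eq hcomp.symm) (le_ciSup hbdd ⟨_, hunit i₀⟩)
    · have hne01 : i₀ ≠ i₁ := fun h =>
        absurd (congrArg hS.1.eigenvalues h) hlt.ne
      set mv := hS.1.eigenvalues i₀ with hmv
      set Mv := hS.1.eigenvalues i₁ with hMv
      obtain ⟨u, hu⟩ := coef_surj hS.1 (fun i =>
        if i = i₀ then Real.sqrt (Mv / (mv + Mv))
        else if i = i₁ then Real.sqrt (mv / (mv + Mv)) else 0)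
      have ha2 : Real.sqrt (Mv / (mv + Mv)) ^ 2 = Mv / (mv + Mv) :=
        Real.sq_sqrt (by positivity)
      have hb2 : Real.sqrt (mv / (mv + Mv)) ^ 2 = mv / (mv + Mv) :=
        Real.sq_sqrt (by positivity)
      have husum : ∑ i, u i ^ 2 = 1 := by
        rw [← hA u]
        simp only [hu]
        have h4 := sum_coef_two hne01 (Real.sqrt (Mv / (mv + Mv)))
          (Real.sqrt (mv / (mv + Mv))) (fun _ => (1 : ℝ))
        simp only [one_mul] at h4
        rw [h4, ha2, hb2]
        field_simp
        ring
      have hden : ∑ i, u i * S.mulVec u i = 2 * (mv * Mv) / (mv + Mv) := by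
        rw [hB u]
        simp only [hu]
        rw [sum_coef_two hne01, ha2, hb2]
        rw [← hmv, ← hMv]
        field_simp
        ring
      have hnum2 : ∑ i, (S.mulVec u i) ^ 2 = mv * Mv := by
        rw [hC u]
        simp only [hu]
        rw [sum_coef_two hne01, ha2, hb2]
        rw [← hmv, ← hMv]
        field_simp
      have hval : Real.sqrt (mv * Mv) / (2 * (mv * Mv) / (mv + Mv))
          = (mv + Mv) / (2 * Real.sqrt (mv * Mv)) := by
        have hs2 : Real.sqrt (mv * Mv) ^ 2 = mv * Mv := Real.sq_sqrt (by positivity)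
        have h6 : (mv + Mv) * (2 * (mv * Mv) / (mv + Mv)) = 2 * (mv * Mv) := by
          field_simp
        rw [div_eq_div_iff (by positivity) (by positivity), h6]
        nlinarith [hs2]
      have hcomp : Real.sqrt (∑ i, (S.mulVec u i) ^ 2)
          / (∑ i, u i * S.mulVec u i) - 1
          = (mv + Mv) / (2 * Real.sqrt (mv * Mv)) - 1 := by
        rw [hnum2, hden, hval]
      unfold skew
      exact le_trans (le_of_eq hcomp.symm) (le_ciSup hbdd ⟨u, husum⟩)
  constructor
  · rw [hmax, hmin, bound_eq hm hM]
    exact key1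
  · intro hd2
    subst hd2
    rw [hmax, hmin, bound_eq hm hM]
    refine le_antisymm ?_ key1
    unfold skew
    refine ciSup_le fun u => ?_
    have hx : coef hS.1 u.1 0 ^ 2 + coef hS.1 u.1 1 ^ 2 = 1 := by
      have h5 := hA u.1
      rw [u.2, Fin.sum_univ_two] at h5
      exact h5
    have hkant := kantorovich (hS.1.eigenvalues 0) (hS.1.eigenvalues 1)
      (coef hS.1 u.1 0 ^ 2) (coef hS.1 u.1 1 ^ 2) (hμpos 0) (hμpos 1)
      (sq_nonneg _) (sq_nonneg _) hx
    have hBB : ∑ i, u.1 i * S.mulVec u.1 i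
        = hS.1.eigenvalues 0 * coef hS.1 u.1 0 ^ 2
          + hS.1.eigenvalues 1 * coef hS.1 u.1 1 ^ 2 := by
      rw [hB u.1, Fin.sum_univ_two]
    have hCC : ∑ i, (S.mulVec u.1 i) ^ 2
        = hS.1.eigenvalues 0 ^ 2 * coef hS.1 u.1 0 ^ 2
          + hS.1.eigenvalues 1 ^ 2 * coef hS.1 u.1 1 ^ 2 := by
      rw [hC u.1, Fin.sum_univ_two]
    have e2 : ∀ j : Fin 2, j = 0 ∨ j = 1 := by decide
    have h00 := hi₀ 0 (Finset.mem_univ _)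
    have h01 := hi₀ 1 (Finset.mem_univ _)
    have h10 := hi₁ 0 (Finset.mem_univ _)
    have h11 := hi₁ 1 (Finset.mem_univ _)
    have hsp : hS.1.eigenvalues i₀ + hS.1.eigenvalues i₁
          = hS.1.eigenvalues 0 + hS.1.eigenvalues 1
        ∧ hS.1.eigenvalues i₀ * hS.1.eigenvalues i₁
          = hS.1.eigenvalues 0 * hS.1.eigenvalues 1 := by
      rcases e2 i₀ with rfl | rfl <;> rcases e2 i₁ with rfl | rfl <;>
        constructor <;> nlinarith [h00, h01, h10, h11, hμpos 0, hμpos 1]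
    rw [hsp.1, hsp.2, hBB, hCC]
    exact sub_le_sub_right hkant 1
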